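/- Let V be a finite set and Payoff : V × V → ℝ a function satisfying Payoff(h,c) + Payoff(c,h) ≤ 1 for all h,c ∈ V. Then the minimax value of the zero-sum game with this payoff is at most 1/2: there exists a probability distribution p over V such that for every c ∈ V, Σ_{h} p(h)·Payoff(h,c) ≤ 1/2. -/

import Mathlib

/-- if `Payoff(h,c) + Payoff(c,h) ≤ 1` for all `h, c` in a finite set `V`,
then the minimax value of the zero-sum game is at most `1/2`: there is a probability
distribution `p` on `V` such that for every pure adversary strategy `c`,
`∑ h, p(h) · Payoff(h,c) ≤ 1/2`. -/
theorem stmt3 {V : Type*} [Fintype V] [Nonempty V] (Payoff : V → V → ℝ)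
    (hsym : ∀ h c : V, Payoff h c + Payoff c h ≤ 1) :
    ∃ p : V → ℝ, (∀ h, 0 ≤ p h) ∧ (∑ h, p h = 1) ∧
      ∀ c : V, ∑ h, p h * Payoff h c ≤ 1 / 2 := by
  classical
  by_contra hcon
  push_neg at hcon
  set A := Payoff with hA
  -- quadratic form bound: for q in the simplex, qᵀ A q ≤ 1/2
  have quad : ∀ q : V → ℝ, (∀ h, 0 ≤ q h) → (∑ h, q h = 1) →
      ∑ c, (∑ h, q h * A h c) * q c ≤ 1 / 2 := by
    intro q hq hq1
    have h2 : 2 * ∑ c, (∑ h, q h * A h c) * q c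
        = ∑ c, ∑ h, q h * q c * (A h c + A c h) := by
      have hswap : ∑ c, ∑ h, q h * q c * A c h = ∑ c, ∑ h, q h * q c * A h c := by
        rw [Finset.sum_comm]
        apply Finset.sum_congr rfl; intro c _
        apply Finset.sum_congr rfl; intro h _
        ring
      calc 2 * ∑ c, (∑ h, q h * A h c) * q c
          = ∑ c, ∑ h, q h * q c * A h c + ∑ c, ∑ h, q h * q c * A c h := by
            rw [hswap]; rw [two_mul]; congr 1 <;>
              · apply Finset.sum_congr rfl; intro c _
                rw [Finset.sum_mul]
                apply Finset.sum_congr rfl; intro h _; ring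
        _ = ∑ c, ∑ h, q h * q c * (A h c + A c h) := by
            rw [← Finset.sum_add_distrib]
            apply Finset.sum_congr rfl; intro c _
            rw [← Finset.sum_add_distrib]
            apply Finset.sum_congr rfl; intro h _; ring
    have hle : ∑ c, ∑ h, q h * q c * (A h c + A c h) ≤ ∑ c, ∑ h, q h * q c := by
      apply Finset.sum_le_sum; intro c _
      apply Finset.sum_le_sum; intro h _
      have := hsym h c
      have := mul_nonneg (hq h) (hq c)
      nlinarith
    have hsum1 : ∑ c, ∑ h, q h * q c = 1 := by
      have hrow : ∀ c, ∑ h, q h * q c = q c := by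
        intro c; rw [← Finset.sum_mul, hq1, one_mul]
      simp only [hrow]; exact hq1
    nlinarith [h2, hle, hsum1]
  -- the map sending a mixed strategy to its payoff vector
  set ℓ : (V → ℝ) → (V → ℝ) := fun p c => ∑ h, p h * A h c with hℓ
  have ℓcont : Continuous ℓ := by
    apply continuous_pi; intro c
    exact continuous_finset_sum _ fun h _ => (continuous_apply h).mul continuous_const
  have ℓlin : ∀ (a b : ℝ) (p p' : V → ℝ), ℓ (a • p + b • p') = a • ℓ p + b • ℓ p' := by
    intro a b p p'
    funext c
    simp only [hℓ, Pi.add_apply, Pi.smul_apply, smul_eq_mul, Finset.mul_sum,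
      ← Finset.sum_add_distrib]
    apply Finset.sum_congr rfl; intro h _; ring
  set S : Set (V → ℝ) := ℓ '' stdSimplex ℝ V with hS
  set T : Set (V → ℝ) := {x | ∀ c, x c ≤ 1 / 2} with hT
  have hScv : Convex ℝ S := by
    rintro x ⟨p, hp, rfl⟩ y ⟨p', hp', rfl⟩ a b ha hb hab
    exact ⟨a • p + b • p', convex_stdSimplex ℝ V hp hp' ha hb hab, (ℓlin a b p p')⟩
  have hScp : IsCompact S := (isCompact_stdSimplex ℝ V).image ℓcont
  have hTcv : Convex ℝ T := by
    intro x hx y hy a b ha hb hab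
    intro c
    have := hx c; have := hy c
    simp only [Pi.add_apply, Pi.smul_apply, smul_eq_mul]
    nlinarith
  have hTcl : IsClosed T := by
    have : T = ⋂ c, {x : V → ℝ | x c ≤ 1 / 2} := by
      ext x; simp [hT]
    rw [this]
    exact isClosed_iInter fun c => isClosed_le (continuous_apply c) continuous_const
  have hdisj : Disjoint T S := by
    rw [Set.disjoint_right]
    rintro x ⟨p, hp, rfl⟩ hxT
    obtain ⟨hp0, hp1⟩ := hp
    obtain ⟨c, hc⟩ := hcon p hp0 hp1
    exact absurd (hxT c) (not_le.mpr hc)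
  obtain ⟨f, u, v, hfT, huv, hfS⟩ :=
    geometric_hahn_banach_closed_compact hTcv hTcl hScv hScp hdisj
  -- the functional is given by a vector lam
  set lam : V → ℝ := fun c => f (fun j => if c = j then (1 : ℝ) else 0) with hlam
  have frep : ∀ x : V → ℝ, f x = ∑ c, x c * lam c := by
    intro x
    conv_lhs => rw [pi_eq_sum_univ x]
    rw [map_sum]
    apply Finset.sum_congr rfl; intro c _
    rw [map_smul]; rfl
  set half : V → ℝ := fun _ => 1 / 2 with hhalf
  have hhalfT : half ∈ T := fun c => le_refl _
  -- lam is nonneg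
  have hlam0 : ∀ c, 0 ≤ lam c := by
    intro c
    by_contra hneg
    push_neg at hneg
    set t : ℝ := (u - f half + 1) / (-lam c) with ht
    have htpos : 0 < t := div_pos (by linarith [hfT half hhalfT]) (by linarith)
    have hmem : half - t • (fun j => if c = j then (1 : ℝ) else 0) ∈ T := by
      intro j
      simp only [Pi.sub_apply, Pi.smul_apply, smul_eq_mul, hhalf]
      by_cases hcj : c = j <;> simp [hcj] <;> nlinarith
    have := hfT _ hmem
    rw [map_sub, map_smul] at this
    have hfval : f (fun j => if c = j then (1 : ℝ) else 0) = lam c := rfl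
    rw [smul_eq_mul, hfval] at this
    have hne : (-lam c) ≠ 0 := ne_of_gt (by linarith)
    have htval : t * lam c = -(u - f half + 1) := by
      rw [ht, div_mul_eq_mul_div, div_eq_iff hne]; ring
    rw [htval] at this
    linarith
  have hfhalf : f half = (∑ c, lam c) / 2 := by
    rw [frep]
    rw [Finset.sum_div]
    apply Finset.sum_congr rfl; intro c _
    simp [hhalf]; ring
  -- total mass is positive
  set sl : ℝ := ∑ c, lam c with hsl
  have hslpos : 0 < sl := by
    by_contra hle
    push_neg at hle
    have hsl0 : sl = 0 := le_antisymm hle (Finset.sum_nonneg fun c _ => hlam0 c)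
    have hall : ∀ c ∈ Finset.univ, lam c = 0 := by
      intro c _
      exact (Finset.sum_eq_zero_iff_of_nonneg fun c _ => hlam0 c).mp hsl0 c (Finset.mem_univ c)
    -- then f ≡ 0 on everything, contradiction with strict separation
    have hq : (fun h => (Fintype.card V : ℝ)⁻¹) ∈ stdSimplex ℝ V := by
      constructor
      · intro h; positivity
      · simp [Finset.card_univ]
    have hmem : ℓ (fun h => (Fintype.card V : ℝ)⁻¹) ∈ S := ⟨_, hq, rfl⟩
    have h1 := hfS _ hmem
    have h2 := hfT half hhalfT
    rw [frep] at h1 h2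
    have hz : ∀ x : V → ℝ, (∑ c, x c * lam c) = 0 := by
      intro x
      apply Finset.sum_eq_zero; intro c _
      rw [hall c (Finset.mem_univ c), mul_zero]
    rw [hz] at h1
    rw [hz] at h2
    linarith
  -- take q = lam / sl, a point of the simplex
  set q : V → ℝ := fun c => lam c / sl with hq
  have hq0 : ∀ c, 0 ≤ q c := fun c => div_nonneg (hlam0 c) hslpos.le
  have hq1 : ∑ c, q c = 1 := by
    rw [hq]
    rw [← Finset.sum_div, ← hsl, div_self hslpos.ne']
  have hmemS : ℓ q ∈ S := ⟨q, ⟨hq0, hq1⟩, rfl⟩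
  have hv := hfS _ hmemS
  have hu := hfT half hhalfT
  rw [frep] at hv
  have hℓval : ∑ c, ℓ q c * lam c = sl * ∑ c, (∑ h, q h * A h c) * q c := by
    rw [Finset.mul_sum]
    apply Finset.sum_congr rfl; intro c _
    have : lam c = sl * q c := by
      rw [hq]; field_simp
    rw [this]; ring
  rw [hℓval] at hv
  have hquad := quad q hq0 hq1
  have : sl * ∑ c, (∑ h, q h * A h c) * q c ≤ sl * (1 / 2) := by
    exact mul_le_mul_of_nonneg_left hquad hslpos.le
  rw [hfhalf] at hu
  linarith
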